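/- The ring R = { a₀ + a₁x + a₂x² + ⋯ : a₀ ∈ ℤ, aᵢ ∈ ℚ for i ≥ 1 } (a subring of ℚ[[x]]) is locally stable but does not have almost stable range 1. -/

import Mathlib

/-- A commutative ring has stable range 1. -/
def HasStableRange1 (R : Type*) [CommRing R] : Prop :=
  ∀ a b : R, Ideal.span {a} ⊔ Ideal.span {b} = ⊤ → ∃ y : R, IsUnit (a + b * y)

/-- An element `a` is stable if `R/aR` has stable range 1. -/
def IsStableElem {R : Type*} [CommRing R] (a : R) : Prop :=
  HasStableRange1 (R ⧸ Ideal.span {a})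

/-- A commutative ring is locally stable. -/
def LocallyStable (R : Type*) [CommRing R] : Prop :=
  ∀ a b : R, Ideal.span {a} ⊔ Ideal.span {b} = ⊤ →
    ∃ y : R, HasStableRange1 (R ⧸ Ideal.span {a + b * y})

/-- A clean ring: every element is the sum of an idempotent and a unit. -/
def IsCleanRing (R : Type*) [CommRing R] : Prop :=
  ∀ a : R, ∃ e u : R, IsIdempotentElem e ∧ IsUnit u ∧ a = e + u

/-- A ring has neat range 1. -/
def NeatRange1 (R : Type*) [CommRing R] : Prop :=
  ∀ a b : R, Ideal.span {a} ⊔ Ideal.span {b} = ⊤ →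
    ∃ y : R, IsCleanRing (R ⧸ Ideal.span {a + b * y})

/-- A ring has almost stable range 1: every proper homomorphic image has stable range 1. -/
def AlmostStableRange1 (R : Type*) [CommRing R] : Prop :=
  ∀ I : Ideal R, I ≠ ⊥ → HasStableRange1 (R ⧸ I)

/-- An elementary divisor ring: every rectangular matrix admits diagonal reduction. -/
def ElementaryDivisorRing (R : Type*) [CommRing R] : Prop :=
  ∀ (m n : ℕ) (A : Matrix (Fin m) (Fin n) R),
    ∃ (P : Matrix (Fin m) (Fin m) R) (Q : Matrix (Fin n) (Fin n) R),
      IsUnit P ∧ IsUnit Q ∧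
      (∀ (i : Fin m) (j : Fin n), (i : ℕ) ≠ (j : ℕ) → (P * A * Q) i j = 0) ∧
      (∀ (i i' : Fin m) (j j' : Fin n), (i : ℕ) = (j : ℕ) → (i' : ℕ) = (j' : ℕ) →
        (i' : ℕ) = (i : ℕ) + 1 → (P * A * Q) i j ∣ (P * A * Q) i' j')

/-- A ring is strongly completable. -/
def StronglyCompletable (R : Type*) [CommRing R] : Prop :=
  ∀ (n : ℕ) (hn : 0 < n) (a : Fin n → R) (d : R),
    (⨆ i, Ideal.span {a i}) = Ideal.span {d} →
    ∃ A : Matrix (Fin n) (Fin n) R, (∀ j, A ⟨0, hn⟩ j = a j) ∧ A.det = d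

/-- The ring of power series over `ℚ` with integer constant coefficient. -/
noncomputable def R17 : Subring (PowerSeries ℚ) :=
  ((Int.castRingHom ℚ).range).comap (PowerSeries.constantCoeff (R := ℚ))

/- ### Auxiliary lemmas -/

lemma spanSupTop_iff {R : Type*} [CommRing R] {a b : R} :
    Ideal.span {a} ⊔ Ideal.span {b} = ⊤ ↔ IsCoprime a b := by
  rw [← Ideal.isCoprime_iff_sup_eq, Ideal.isCoprime_span_singleton_iff]

lemma hasStableRange1_iff {R : Type*} [CommRing R] :
    HasStableRange1 R ↔ ∀ a b : R, IsCoprime a b → ∃ y, IsUnit (a + b * y) := by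
  unfold HasStableRange1; simp_rw [spanSupTop_iff]

lemma sr1_of_equiv {A B : Type*} [CommRing A] [CommRing B] (e : A ≃+* B)
    (h : HasStableRange1 A) : HasStableRange1 B := by
  rw [hasStableRange1_iff] at h ⊢
  rintro a b ⟨r, s, hrs⟩
  obtain ⟨y, hy⟩ := h (e.symm a) (e.symm b) ⟨e.symm r, e.symm s, by
    rw [← map_mul, ← map_mul, ← map_add, hrs, map_one]⟩
  refine ⟨e y, ?_⟩
  have := hy.map e
  rwa [map_add, map_mul, e.apply_symm_apply, e.apply_symm_apply] at this

lemma int_not_sr1 : ¬ HasStableRange1 ℤ := by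
  rw [hasStableRange1_iff]
  intro h
  obtain ⟨y, hy⟩ := h 2 5 ⟨3, -1, by ring⟩
  rw [Int.isUnit_iff] at hy
  omega

lemma exists_coprime_add_mul (n : ℕ) (hn : n ≠ 0) (A B T : ℤ)
    (h1 : ∃ R S : ℤ, R * A + S * B + T * n = 1) :
    ∃ Y : ℤ, IsCoprime (A + B * Y) (n : ℤ) := by
  obtain ⟨R, S, hRS⟩ := h1
  refine ⟨∏ p ∈ n.primeFactors.filter (fun p : ℕ => ¬ (p : ℤ) ∣ A), (p : ℤ), ?_⟩
  set Y := ∏ p ∈ n.primeFactors.filter (fun p : ℕ => ¬ (p : ℤ) ∣ A), (p : ℤ) with hY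
  rw [Int.isCoprime_iff_gcd_eq_one]
  by_contra hg
  obtain ⟨p, hp, hpg⟩ := Nat.exists_prime_and_dvd hg
  have hpZ : Prime (p : ℤ) := Nat.prime_iff_prime_int.mp hp
  have hp1 : (p : ℤ) ∣ A + B * Y :=
    dvd_trans (Int.natCast_dvd_natCast.mpr hpg) (Int.gcd_dvd_left _ _)
  have hp2 : (p : ℤ) ∣ (n : ℤ) :=
    dvd_trans (Int.natCast_dvd_natCast.mpr hpg) (Int.gcd_dvd_right _ _)
  by_cases hpa : (p : ℤ) ∣ A
  · have hpY : ¬ (p : ℤ) ∣ Y := by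
      intro hd
      obtain ⟨q, hq, hdq⟩ := hpZ.exists_mem_finset_dvd hd
      rw [Finset.mem_filter] at hq
      have hqp : p = q := ((Nat.prime_of_mem_primeFactors hq.1).eq_one_or_self_of_dvd p
        (Int.natCast_dvd_natCast.mp hdq)).resolve_left hp.ne_one
      exact hq.2 (hqp ▸ hpa)
    have hpB : ¬ (p : ℤ) ∣ B := by
      intro hd
      have : (p : ℤ) ∣ 1 := by
        rw [← hRS]
        exact dvd_add (dvd_add (Dvd.dvd.mul_left hpa R) (Dvd.dvd.mul_left hd S))
          (Dvd.dvd.mul_left hp2 T)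
      exact hpZ.not_unit (isUnit_of_dvd_one this)
    have : (p : ℤ) ∣ B * Y := (dvd_add_right hpa).mp hp1
    rcases hpZ.dvd_mul.mp this with h | h
    · exact hpB h
    · exact hpY h
  · have hpY : (p : ℤ) ∣ Y := Finset.dvd_prod_of_mem _ (by
      rw [Finset.mem_filter]
      exact ⟨Nat.mem_primeFactors.mpr ⟨hp, Int.natCast_dvd_natCast.mp hp2, hn⟩, hpa⟩)
    exact hpa ((dvd_add_right (Dvd.dvd.mul_left hpY B)).mp (by rwa [add_comm] at hp1))

lemma zmod_sr1 (n : ℕ) (hn : n ≠ 0) : HasStableRange1 (ZMod n) := by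
  rw [hasStableRange1_iff]
  intro a b h
  obtain ⟨r, s, hrs⟩ := h
  obtain ⟨A, rfl⟩ := ZMod.intCast_surjective a
  obtain ⟨B, rfl⟩ := ZMod.intCast_surjective b
  obtain ⟨R, rfl⟩ := ZMod.intCast_surjective r
  obtain ⟨S, rfl⟩ := ZMod.intCast_surjective s
  have h0 : ((R * A + S * B - 1 : ℤ) : ZMod n) = 0 := by push_cast; rw [hrs]; ring
  obtain ⟨T, hT⟩ := (ZMod.intCast_zmod_eq_zero_iff_dvd _ _).mp h0
  obtain ⟨Y, hY⟩ := exists_coprime_add_mul n hn A B (-T) ⟨R, S, by linarith⟩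
  obtain ⟨u, v, huv⟩ := hY
  refine ⟨(Y : ZMod n), IsUnit.of_mul_eq_one ((u : ZMod n)) ?_⟩
  have := congrArg (fun z : ℤ => (z : ZMod n)) huv
  simp only [Int.cast_add, Int.cast_mul, Int.cast_one, Int.cast_natCast,
    ZMod.natCast_self, mul_zero, add_zero] at this
  rw [mul_comm] at this
  linear_combination this

lemma mem_R17 {f : PowerSeries ℚ} :
    f ∈ R17 ↔ ∃ a : ℤ, (a : ℚ) = PowerSeries.constantCoeff (R := ℚ) f := by
  simp [R17, Subring.mem_comap, RingHom.mem_range]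

lemma cc_int (f : R17) :
    (((PowerSeries.constantCoeff (R := ℚ) f.1).num : ℤ) : ℚ) = PowerSeries.constantCoeff (R := ℚ) f.1 := by
  obtain ⟨a, ha⟩ := mem_R17.mp f.2
  rw [← ha, Rat.num_intCast]

/-- The constant-coefficient homomorphism `R17 →+* ℤ`. -/
noncomputable def phi0 : R17 →+* ℤ where
  toFun f := (PowerSeries.constantCoeff (R := ℚ) f.1).num
  map_one' := by norm_num
  map_zero' := by norm_num
  map_mul' f g := by
    apply (Int.cast_injective (α := ℚ))
    rw [Int.cast_mul, cc_int f, cc_int g]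
    have : ((f * g : R17) : PowerSeries ℚ) = (f : PowerSeries ℚ) * g := rfl
    rw [cc_int (f * g), this, map_mul]
  map_add' f g := by
    apply (Int.cast_injective (α := ℚ))
    rw [Int.cast_add, cc_int f, cc_int g]
    have : ((f + g : R17) : PowerSeries ℚ) = (f : PowerSeries ℚ) + g := rfl
    rw [cc_int (f + g), this, map_add]

lemma phi0_cast (f : R17) :
    ((phi0 f : ℤ) : ℚ) = PowerSeries.constantCoeff (R := ℚ) f.1 := cc_int f

lemma phi0_surjective : Function.Surjective phi0 := by
  intro n
  refine ⟨(n : R17), ?_⟩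
  apply (Int.cast_injective (α := ℚ))
  rw [phi0_cast]
  push_cast
  simp

lemma ker_eq_span (f : R17) (hf : phi0 f ≠ 0) :
    RingHom.ker ((Int.castRingHom (ZMod (phi0 f).natAbs)).comp phi0) = Ideal.span {f} := by
  have hc : PowerSeries.constantCoeff (R := ℚ) f.1 ≠ 0 := by
    rw [← phi0_cast f]
    exact_mod_cast hf
  ext g
  rw [RingHom.mem_ker, Ideal.mem_span_singleton, RingHom.comp_apply,
    Int.coe_castRingHom, ZMod.intCast_zmod_eq_zero_iff_dvd, Int.natAbs_dvd]
  constructor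
  · rintro ⟨k, hk⟩
    refine ⟨⟨(f.1)⁻¹ * g.1, mem_R17.mpr ⟨k, ?_⟩⟩, ?_⟩
    · rw [map_mul, PowerSeries.constantCoeff_inv, ← phi0_cast f, ← phi0_cast g, hk]
      push_cast
      field_simp
    · apply Subtype.ext
      show (g : PowerSeries ℚ) = (f : PowerSeries ℚ) * ((f.1)⁻¹ * g.1)
      rw [← mul_assoc, PowerSeries.mul_inv_cancel _ hc, one_mul]
  · rintro ⟨h, rfl⟩
    rw [map_mul]
    exact Dvd.intro _ rfl

lemma quot_sr1 (f : R17) (hf : phi0 f ≠ 0) :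
    HasStableRange1 (R17 ⧸ Ideal.span {f}) := by
  set n := (phi0 f).natAbs with hn
  have hn0 : n ≠ 0 := Int.natAbs_ne_zero.mpr hf
  set ψ : R17 →+* ZMod n := (Int.castRingHom (ZMod n)).comp phi0 with hψ
  have hsurj : Function.Surjective ψ :=
    (ZMod.intCast_surjective).comp phi0_surjective
  have e : R17 ⧸ Ideal.span {f} ≃+* ZMod n :=
    (Ideal.quotEquivOfEq (ker_eq_span f hf).symm).trans
      (RingHom.quotientKerEquivOfSurjective hsurj)
  exact sr1_of_equiv e.symm (zmod_sr1 n hn0)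

theorem stmt17 : LocallyStable R17 ∧ ¬ AlmostStableRange1 R17 := by
  constructor
  · intro a b hab
    rw [spanSupTop_iff] at hab
    obtain ⟨r, s, hrs⟩ := hab
    have h0 : phi0 r * phi0 a + phi0 s * phi0 b = 1 := by
      have := congrArg phi0 hrs
      rwa [map_add, map_mul, map_mul, map_one] at this
    by_cases hA : phi0 a = 0
    · have hb : phi0 b ≠ 0 := by
        intro h
        rw [hA, h, mul_zero, mul_zero, add_zero] at h0
        exact one_ne_zero h0.symm
      refine ⟨1, ?_⟩
      have hval : phi0 (a + b * 1) = phi0 b := by rw [mul_one, map_add, hA, zero_add]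
      exact quot_sr1 _ (hval ▸ hb)
    · refine ⟨0, ?_⟩
      have hval : phi0 (a + b * 0) = phi0 a := by rw [mul_zero, add_zero]
      exact quot_sr1 _ (hval ▸ hA)
  · intro h
    have hXmem : (PowerSeries.X : PowerSeries ℚ) ∈ R17 :=
      mem_R17.mpr ⟨0, by simp⟩
    have hker_ne : RingHom.ker phi0 ≠ ⊥ := by
      intro hbot
      have hXk : (⟨PowerSeries.X, hXmem⟩ : R17) ∈ RingHom.ker phi0 := by
        rw [RingHom.mem_ker]
        apply (Int.cast_injective (α := ℚ))
        rw [phi0_cast]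
        simp
      rw [hbot, Ideal.mem_bot] at hXk
      have : (PowerSeries.X : PowerSeries ℚ) = 0 := congrArg Subtype.val hXk
      exact PowerSeries.X_ne_zero this
    have hsr1 := h (RingHom.ker phi0) hker_ne
    exact int_not_sr1
      (sr1_of_equiv (RingHom.quotientKerEquivOfSurjective phi0_surjective) hsr1)
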